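/- If n is odd and T is a tree on n vertices with radius equal to ⌈(n−1)/2⌉ = (n−1)/2, then T contains a path on n−1 vertices; i.e., T is obtained from a path P_{n−1} by attaching one pendant edge. -/

import Mathlib

/-- The radius of a graph. -/
noncomputable def gRadius {V : Type*} (G : SimpleGraph V) : ℕ :=
  sInf {r | ∃ v : V, ∀ u : V, G.dist v u ≤ r}

open SimpleGraph Walk

section Aux

variable {V : Type*} {G : SimpleGraph V}

/-- In a tree, every path realizes the distance between its endpoints. -/
lemma tree_path_length_eq_dist (hT : G.IsTree) {u v : V} (p : G.Walk u v) (hp : p.IsPath) :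
    p.length = G.dist u v := by
  refine le_antisymm ?_ (SimpleGraph.dist_le p)
  obtain ⟨q, hq, hlen⟩ :=
    SimpleGraph.Reachable.exists_path_of_dist (hT.isConnected.preconnected u v)
  have := (hT.existsUnique_path u v).unique hp hq
  rw [this, hlen]

/-- Appending two paths which only share the junction vertex gives a path. -/
lemma isPath_append_of_inter {u v w : V} {p : G.Walk u v} {q : G.Walk v w}
    (hp : p.IsPath) (hq : q.IsPath) (h : ∀ a ∈ p.support, a ∈ q.support → a = v) :
    (p.append q).IsPath := by
  rw [Walk.isPath_def, Walk.support_append]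
  refine List.Nodup.append hp.support_nodup hq.support_nodup.tail ?_
  intro a hap haq
  have haq' : a ∈ q.support := List.mem_of_mem_tail haq
  have hav : a = v := h a hap haq'
  have hnd := hq.support_nodup
  rw [q.support_eq_cons] at hnd
  exact (List.nodup_cons.mp hnd).1 (hav ▸ haq)

/-- If the concatenation of two walks is a path, the walks only share the junction vertex. -/
lemma eq_junction_of_append_path {u v w : V} {p : G.Walk u v} {q : G.Walk v w}
    (h : (p.append q).IsPath) {a : V} (hap : a ∈ p.support) (haq : a ∈ q.support) : a = v := by
  by_contra hne
  have hq : a ∈ q.support.tail := by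
    rw [q.support_eq_cons] at haq
    rcases List.mem_cons.mp haq with h1 | h1
    · exact absurd h1 hne
    · exact h1
  have := h.support_nodup
  rw [Walk.support_append] at this
  exact (List.disjoint_of_nodup_append this) hap hq

/-- A path has a path prefix of any shorter length (with support contained in the original). -/
lemma exists_prefix_path : ∀ {u v : V} (p : G.Walk u v), p.IsPath → ∀ k, k ≤ p.length →
    ∃ (w : V) (q : G.Walk u w), q.IsPath ∧ q.length = k ∧ ∀ x ∈ q.support, x ∈ p.support := by
  intro u v p
  induction p with
  | nil =>
    intro _ k hk
    have : k = 0 := Nat.le_zero.mp hk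
    subst this
    exact ⟨_, Walk.nil, Walk.IsPath.nil, rfl, fun x hx => hx⟩
  | @cons a b c hab p ih =>
    intro hp k hk
    match k with
    | 0 =>
      refine ⟨a, Walk.nil, Walk.IsPath.nil, rfl, ?_⟩
      intro xx hx
      simp only [Walk.support_nil, List.mem_singleton] at hx
      subst hx
      exact Walk.start_mem_support _
    | Nat.succ k' =>
      have hp' : p.IsPath := ((Walk.cons_isPath_iff hab p).mp hp).1
      have hna : a ∉ p.support := ((Walk.cons_isPath_iff hab p).mp hp).2
      obtain ⟨w, q, hq, hqlen, hqsub⟩ := ih hp' k' (by simpa using hk)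
      refine ⟨w, Walk.cons hab q, ?_, by simp [hqlen], ?_⟩
      · rw [Walk.cons_isPath_iff]
        exact ⟨hq, fun hmem => hna (hqsub a hmem)⟩
      · intro xx hx
        rw [Walk.support_cons] at hx ⊢
        rcases List.mem_cons.mp hx with rfl | hx
        · exact List.mem_cons_self
        · exact List.mem_cons_of_mem _ (hqsub xx hx)

/-- A walk can be split at any index. -/
lemma exists_split : ∀ {u v : V} (p : G.Walk u v) (i : ℕ), i ≤ p.length →
    ∃ (m : V) (p1 : G.Walk u m) (p2 : G.Walk m v), p1.append p2 = p ∧ p1.length = i := by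
  intro u v p
  induction p with
  | nil =>
    intro i hi
    have : i = 0 := Nat.le_zero.mp hi
    subst this
    exact ⟨_, Walk.nil, Walk.nil, rfl, rfl⟩
  | @cons a b c hab p ih =>
    intro i hi
    match i with
    | 0 => exact ⟨a, Walk.nil, Walk.cons hab p, by rw [Walk.nil_append], rfl⟩
    | Nat.succ j =>
      obtain ⟨m, p1, p2, happ, hlen⟩ := ih j (by simpa using hi)
      exact ⟨m, Walk.cons hab p1, p2, by rw [Walk.cons_append, happ], by simp [hlen]⟩

/-- Key branching lemma for trees: given a path through `m` from `x` to `y` and any path `q`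
ending at `m`, one of the two concatenations is a path. -/
lemma tree_branch_aux [DecidableEq V] (hT : G.IsTree) {x y : V} :
    ∀ {z m : V} (q : G.Walk z m) (p1 : G.Walk x m) (p2 : G.Walk m y),
      (p1.append p2).IsPath → q.IsPath →
      (q.append p1.reverse).IsPath ∨ (q.append p2).IsPath := by
  intro z m q
  induction q with
  | nil =>
    intro p1 p2 hp _
    left
    rw [Walk.nil_append]
    exact hp.of_append_left.reverse
  | @cons z z' m' h q ih =>
    intro p1 p2 hp hq
    have hq' : q.IsPath := ((Walk.cons_isPath_iff h q).mp hq).1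
    have hzq : z ∉ q.support := ((Walk.cons_isPath_iff h q).mp hq).2
    rcases ih p1 p2 hp hq' with h1 | h2
    · by_cases hz : z ∈ (q.append p1.reverse).support
      · -- z lies on p1; by uniqueness the whole walk `cons h q` lies in p1.
        have hz1 : z ∈ p1.support := by
          rcases (Walk.mem_support_append_iff _ _).mp hz with hc | hc
          · exact absurd hc hzq
          · rwa [Walk.support_reverse, List.mem_reverse] at hc
        have hdrop : (p1.dropUntil z hz1).IsPath := hp.of_append_left.dropUntil hz1
        have hequ : Walk.cons h q = p1.dropUntil z hz1 :=
          (hT.existsUnique_path z m').unique hq hdrop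
        right
        refine isPath_append_of_inter hq hp.of_append_right ?_
        intro a haq hap2
        have hap1 : a ∈ p1.support := by
          rw [hequ] at haq
          exact Walk.support_dropUntil_subset _ _ haq
        exact eq_junction_of_append_path hp hap1 hap2
      · left
        rw [Walk.cons_append]
        rw [Walk.cons_isPath_iff]
        exact ⟨h1, hz⟩
    · by_cases hz : z ∈ (q.append p2).support
      · have hz2 : z ∈ p2.support := by
          rcases (Walk.mem_support_append_iff _ _).mp hz with hc | hc
          · exact absurd hc hzq
          · exact hc
        have hz2r : z ∈ p2.reverse.support := by
          rwa [Walk.support_reverse, List.mem_reverse]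
        have hdrop : (p2.reverse.dropUntil z hz2r).IsPath :=
          hp.of_append_right.reverse.dropUntil hz2r
        have hequ : Walk.cons h q = p2.reverse.dropUntil z hz2r :=
          (hT.existsUnique_path z m').unique hq hdrop
        left
        refine isPath_append_of_inter hq hp.of_append_left.reverse ?_
        intro a haq hap1r
        have hap2 : a ∈ p2.support := by
          rw [hequ] at haq
          have := Walk.support_dropUntil_subset _ _ haq
          rwa [Walk.support_reverse, List.mem_reverse] at this
        have hap1 : a ∈ p1.support := by
          rwa [Walk.support_reverse, List.mem_reverse] at hap1r
        exact eq_junction_of_append_path hp hap1 hap2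
      · right
        rw [Walk.cons_append]
        rw [Walk.cons_isPath_iff]
        exact ⟨h2, hz⟩

/-- In a tree, for a vertex `m` on the path from `x` to `y` and any vertex `z`, the distance
from `z` to one of the two endpoints passes through `m`. -/
lemma tree_branch (hT : G.IsTree) {x m y : V} (p1 : G.Walk x m) (p2 : G.Walk m y)
    (hp : (p1.append p2).IsPath) (z : V) :
    G.dist x z = p1.length + G.dist m z ∨ G.dist y z = p2.length + G.dist m z := by
  classical
  obtain ⟨q, hq, hqd⟩ :=
    SimpleGraph.Reachable.exists_path_of_dist (hT.isConnected.preconnected z m)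
  rcases tree_branch_aux hT q p1 p2 hp hq with h1 | h2
  · left
    have hl := tree_path_length_eq_dist hT _ h1
    rw [Walk.length_append, Walk.length_reverse] at hl
    have e1 : G.dist x z = G.dist z x := SimpleGraph.dist_comm
    have e2 : G.dist m z = G.dist z m := SimpleGraph.dist_comm
    omega
  · right
    have hl := tree_path_length_eq_dist hT _ h2
    rw [Walk.length_append] at hl
    have e1 : G.dist y z = G.dist z y := SimpleGraph.dist_comm
    have e2 : G.dist m z = G.dist z m := SimpleGraph.dist_comm
    omega

end Aux

theorem stmt5 {V : Type*} [Fintype V] (G : SimpleGraph V) (hT : G.IsTree)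
    (n : ℕ) (hn : Fintype.card V = n) (hodd : Odd n)
    (hrad : gRadius G = (n - 1) / 2) :
    -- T contains a path on n - 1 vertices (a path of length n - 2)
    ∃ (u v : V) (p : G.Walk u v), p.IsPath ∧ p.length = n - 2 := by
  classical
  obtain ⟨k, hk⟩ := hodd
  have hne : Nonempty V := hT.isConnected.nonempty
  have hr : (n - 1) / 2 = k := by omega
  rw [hr] at hrad
  by_cases hk0 : k = 0
  · obtain ⟨v⟩ := hne
    exact ⟨v, v, Walk.nil, Walk.IsPath.nil, by simp [Walk.length_nil]; omega⟩
  -- a diametral pair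
  obtain ⟨⟨x, y⟩, -, hmax⟩ :=
    Finset.exists_max_image (Finset.univ ×ˢ Finset.univ)
      (fun p : V × V => G.dist p.1 p.2)
      ⟨(Classical.arbitrary V, Classical.arbitrary V), by simp⟩
  have hmax' : ∀ a b : V, G.dist a b ≤ G.dist x y := fun a b => hmax (a, b) (by simp)
  set d := G.dist x y with hd
  obtain ⟨p0, hp0, hp0len⟩ := hT.isConnected.exists_path_of_dist x y
  have hdn : d < n := by
    have := hp0.length_lt
    rw [hp0len, hn] at this
    exact this
  -- the diameter is at least 2k - 1
  have hd2 : 2 * k - 1 ≤ d := by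
    by_contra hcon
    push_neg at hcon
    have hdle : d ≤ 2 * k - 2 := by omega
    set i := min (k - 1) d with hi
    obtain ⟨m, p1, p2, happ, hlen1⟩ := exists_split p0 i (by omega)
    have hp12 : (p1.append p2).IsPath := by rw [happ]; exact hp0
    have hlensum : p1.length + p2.length = d := by
      have := congrArg Walk.length happ
      rw [Walk.length_append] at this
      omega
    have hecc : ∀ z : V, G.dist m z ≤ k - 1 := by
      intro z
      rcases tree_branch hT p1 p2 hp12 z with hc | hc
      · have hb : G.dist x z ≤ d := hmax' x z
        omega
      · have hb : G.dist y z ≤ d := hmax' y z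
        omega
    have hmem : k - 1 ∈ {r | ∃ v : V, ∀ u : V, G.dist v u ≤ r} := ⟨m, hecc⟩
    have := Nat.sInf_le hmem
    rw [show sInf {r | ∃ v : V, ∀ u : V, G.dist v u ≤ r} = gRadius G from rfl, hrad] at this
    omega
  -- extract a path of length exactly n - 2
  have hle : n - 2 ≤ p0.length := by omega
  obtain ⟨w, q, hq, hqlen, -⟩ := exists_prefix_path p0 hp0 (n - 2) hle
  exact ⟨x, w, q, hq, hqlen⟩
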